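/- Let H be self-adjoint with compact resolvent on a separable Hilbert space, U, V bounded self-adjoint, and f : ℝ → ℝ Borel measurable and nonincreasing such that f(H+U) and f(H+V) are trace class. Then tr([f(H+U) − f(H+V)](U − V)) ≤ 0. -/

import Mathlib

open scoped InnerProductSpace

/-- Monotonicity (Corollary of the trace identity): in the setting of Theorem 5.1 with
`f` nonincreasing, `tr([f(H+U) − f(H+V)](U−V)) ≤ 0`. The setup is as in the trace
identity: complete orthonormal eigensystems `(λ_k, ψ_k)` of `H+U` and `(μ_l, ξ_l)` of
`H+V`, bounded self-adjoint `C = U − V` with `⟪ψ_k, C ξ_l⟫ = (λ_k − μ_l)⟪ψ_k, ξ_l⟫`,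
and `f(H+U)`, `f(H+V)` trace class. -/
theorem stmt_9 {E : Type*} [NormedAddCommGroup E] [InnerProductSpace ℂ E]
    [CompleteSpace E]
    (ψb ξb : HilbertBasis ℕ ℂ E) (lam mu : ℕ → ℝ)
    (f : ℝ → ℝ) (hf : Measurable f) (hanti : Antitone f)
    (C : E →L[ℂ] E) (hCsa : IsSelfAdjoint C)
    (hC : ∀ k l : ℕ, ⟪ψb k, C (ξb l)⟫_ℂ = ((lam k - mu l : ℝ) : ℂ) * ⟪ψb k, ξb l⟫_ℂ)
    (hfU : Summable fun k => |f (lam k)|) (hfV : Summable fun l => |f (mu l)|) :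
    (∑' n : ℕ,
        ⟪ψb n,
          (∑' k : ℕ, ((f (lam k) : ℝ) : ℂ) • (⟪ψb k, C (ψb n)⟫_ℂ • (ψb k : E)))
            - ∑' l : ℕ, ((f (mu l) : ℝ) : ℂ) • (⟪ξb l, C (ψb n)⟫_ℂ • (ξb l : E))⟫_ℂ).re
      ≤ 0 := by
  classical
  set r : ℕ → ℝ := fun n => ∑' l : ℕ,
    (f (lam n) - f (mu l)) * (lam n - mu l) * ‖⟪ψb n, ξb l⟫_ℂ‖ ^ 2 with hr
  have hψ1 : ∀ i, ‖(ψb i : E)‖ = 1 := ψb.orthonormal.1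
  have hξ1 : ∀ i, ‖(ξb i : E)‖ = 1 := ξb.orthonormal.1
  have hψite : ∀ i j : ℕ, ⟪(ψb i : E), ψb j⟫_ℂ = if i = j then 1 else 0 :=
    orthonormal_iff_ite.mp ψb.orthonormal
  have hsym : (C : E →ₗ[ℂ] E).IsSymmetric :=
    ContinuousLinearMap.isSelfAdjoint_iff_isSymmetric.mp hCsa
  -- bound on inner products with C
  have hbd : ∀ x y : E, ‖⟪x, C y⟫_ℂ‖ ≤ ‖x‖ * (‖C‖ * ‖y‖) := by
    intro x y
    calc ‖⟪x, C y⟫_ℂ‖ ≤ ‖x‖ * ‖C y‖ := norm_inner_le_norm x (C y)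
      _ ≤ ‖x‖ * (‖C‖ * ‖y‖) := by gcongr; exact C.le_opNorm y
  -- symmetry identity
  have hsym2 : ∀ x y : E, ⟪C x, y⟫_ℂ = ⟪x, C y⟫_ℂ := fun x y => hsym x y
  have hsym' : ∀ n l : ℕ, ⟪(ξb l : E), C (ψb n)⟫_ℂ
      = ((lam n - mu l : ℝ) : ℂ) * (starRingEnd ℂ) ⟪(ψb n : E), ξb l⟫_ℂ := by
    intro n l
    rw [← inner_conj_symm, hsym2, hC n l, map_mul, Complex.conj_ofReal]
  -- per-n identity
  have key : ∀ n : ℕ,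
      ⟪(ψb n : E),
          (∑' k : ℕ, ((f (lam k) : ℝ) : ℂ) • (⟪ψb k, C (ψb n)⟫_ℂ • (ψb k : E)))
            - ∑' l : ℕ, ((f (mu l) : ℝ) : ℂ) • (⟪ξb l, C (ψb n)⟫_ℂ • (ξb l : E))⟫_ℂ
        = ((r n : ℝ) : ℂ) := by
    intro n
    -- summability of the X family
    have hXs : Summable fun k : ℕ => ((f (lam k) : ℝ) : ℂ) • (⟪ψb k, C (ψb n)⟫_ℂ • (ψb k : E)) := by
      apply Summable.of_norm
      apply Summable.of_nonneg_of_le (fun k => norm_nonneg _)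
        (fun k => ?_) (hfU.mul_right ‖C‖)
      rw [norm_smul, norm_smul, hψ1, mul_one, Complex.norm_real, Real.norm_eq_abs]
      have := hbd (ψb k) (ψb n)
      rw [hψ1, hψ1, one_mul, mul_one] at this
      exact mul_le_mul_of_nonneg_left this (abs_nonneg _)
    have hYs : Summable fun l : ℕ => ((f (mu l) : ℝ) : ℂ) • (⟪ξb l, C (ψb n)⟫_ℂ • (ξb l : E)) := by
      apply Summable.of_norm
      apply Summable.of_nonneg_of_le (fun l => norm_nonneg _)
        (fun l => ?_) (hfV.mul_right ‖C‖)
      rw [norm_smul, norm_smul, hξ1, mul_one, Complex.norm_real, Real.norm_eq_abs]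
      have := hbd (ξb l) (ψb n)
      rw [hξ1, hψ1, one_mul, mul_one] at this
      exact mul_le_mul_of_nonneg_left this (abs_nonneg _)
    rw [inner_sub_right]
    -- compute first inner product
    have hX : ⟪(ψb n : E), ∑' k : ℕ, ((f (lam k) : ℝ) : ℂ) • (⟪ψb k, C (ψb n)⟫_ℂ • (ψb k : E))⟫_ℂ
        = ((f (lam n) : ℝ) : ℂ) * ⟪(ψb n : E), C (ψb n)⟫_ℂ := by
      rw [show (⟪(ψb n : E), ∑' k : ℕ, ((f (lam k) : ℝ) : ℂ) • (⟪ψb k, C (ψb n)⟫_ℂ • (ψb k : E))⟫_ℂ)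
          = innerSL ℂ (ψb n : E) (∑' k : ℕ, ((f (lam k) : ℝ) : ℂ) • (⟪ψb k, C (ψb n)⟫_ℂ • (ψb k : E))) from rfl,
        ContinuousLinearMap.map_tsum _ hXs]
      have : ∀ k : ℕ, innerSL ℂ (ψb n : E) (((f (lam k) : ℝ) : ℂ) • (⟪ψb k, C (ψb n)⟫_ℂ • (ψb k : E)))
          = ((f (lam k) : ℝ) : ℂ) * (⟪ψb k, C (ψb n)⟫_ℂ * ⟪(ψb n : E), ψb k⟫_ℂ) := by
        intro k
        simp [innerSL_apply_apply, inner_smul_right]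
      rw [tsum_congr this, tsum_eq_single n (fun k hk => ?_)]
      · rw [hψite n n, if_pos rfl, mul_one]
      · rw [hψite n k, if_neg (fun h => hk h.symm)]
        ring
    have hY : ⟪(ψb n : E), ∑' l : ℕ, ((f (mu l) : ℝ) : ℂ) • (⟪ξb l, C (ψb n)⟫_ℂ • (ξb l : E))⟫_ℂ
        = ∑' l : ℕ, ((f (mu l) : ℝ) : ℂ) * (⟪ξb l, C (ψb n)⟫_ℂ * ⟪(ψb n : E), ξb l⟫_ℂ) := by
      rw [show (⟪(ψb n : E), ∑' l : ℕ, ((f (mu l) : ℝ) : ℂ) • (⟪ξb l, C (ψb n)⟫_ℂ • (ξb l : E))⟫_ℂ)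
          = innerSL ℂ (ψb n : E) (∑' l : ℕ, ((f (mu l) : ℝ) : ℂ) • (⟪ξb l, C (ψb n)⟫_ℂ • (ξb l : E))) from rfl,
        ContinuousLinearMap.map_tsum _ hYs]
      apply tsum_congr
      intro l
      simp [innerSL_apply_apply, inner_smul_right]
    rw [hX, hY]
    -- expand ⟪ψ_n, C ψ_n⟫ via Parseval over ξ basis
    have hPar : ⟪(ψb n : E), C (ψb n)⟫_ℂ
        = ∑' l : ℕ, ⟪(ψb n : E), ξb l⟫_ℂ * ⟪(ξb l : E), C (ψb n)⟫_ℂ :=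
      (ξb.tsum_inner_mul_inner (ψb n) (C (ψb n))).symm
    have hS1 : Summable fun l : ℕ => ⟪(ψb n : E), ξb l⟫_ℂ * ⟪(ξb l : E), C (ψb n)⟫_ℂ :=
      ξb.summable_inner_mul_inner (ψb n) (C (ψb n))
    have hS1' : Summable fun l : ℕ =>
        ((f (lam n) : ℝ) : ℂ) * (⟪(ψb n : E), ξb l⟫_ℂ * ⟪(ξb l : E), C (ψb n)⟫_ℂ) :=
      hS1.mul_left _
    have hS2 : Summable fun l : ℕ =>
        ((f (mu l) : ℝ) : ℂ) * (⟪ξb l, C (ψb n)⟫_ℂ * ⟪(ψb n : E), ξb l⟫_ℂ) := by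
      apply Summable.of_norm
      apply Summable.of_nonneg_of_le (fun l => norm_nonneg _)
        (fun l => ?_) (hfV.mul_right ‖C‖)
      rw [norm_mul, norm_mul, Complex.norm_real, Real.norm_eq_abs]
      have h1 : ‖⟪(ξb l : E), C (ψb n)⟫_ℂ‖ ≤ ‖C‖ := by
        have := hbd (ξb l) (ψb n); rwa [hξ1, hψ1, one_mul, mul_one] at this
      have h2 : ‖⟪(ψb n : E), ξb l⟫_ℂ‖ ≤ 1 := by
        have := norm_inner_le_norm (𝕜 := ℂ) (ψb n : E) (ξb l)
        rwa [hψ1, hξ1, one_mul] at this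
      calc |f (mu l)| * (‖⟪(ξb l : E), C (ψb n)⟫_ℂ‖ * ‖⟪(ψb n : E), ξb l⟫_ℂ‖)
          ≤ |f (mu l)| * (‖C‖ * 1) := by
            apply mul_le_mul_of_nonneg_left _ (abs_nonneg _)
            exact mul_le_mul h1 h2 (norm_nonneg _) (norm_nonneg C)
        _ = |f (mu l)| * ‖C‖ := by ring
    rw [hPar, ← tsum_mul_left, ← Summable.tsum_sub hS1' hS2, hr, Complex.ofReal_tsum]
    apply tsum_congr
    intro l
    rw [hsym' n l]
    have hmc : ⟪(ψb n : E), ξb l⟫_ℂ * (starRingEnd ℂ) ⟪(ψb n : E), ξb l⟫_ℂ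
        = ((‖⟪(ψb n : E), ξb l⟫_ℂ‖ ^ 2 : ℝ) : ℂ) := by
      rw [Complex.mul_conj, Complex.normSq_eq_norm_sq]
    push_cast at hmc ⊢
    linear_combination (((f (lam n) : ℝ) : ℂ) - ((f (mu l) : ℝ) : ℂ))
      * (((lam n : ℝ) : ℂ) - ((mu l : ℝ) : ℂ)) * hmc
  -- conclude
  rw [tsum_congr key, ← Complex.ofReal_tsum, Complex.ofReal_re]
  apply tsum_nonpos
  intro n
  apply tsum_nonpos
  intro l
  have h1 : (f (lam n) - f (mu l)) * (lam n - mu l) ≤ 0 := by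
    rcases le_total (lam n) (mu l) with h | h
    · have := hanti h
      apply mul_nonpos_of_nonneg_of_nonpos <;> linarith
    · have := hanti h
      apply mul_nonpos_of_nonpos_of_nonneg <;> linarith
  have h2 : (0:ℝ) ≤ ‖⟪(ψb n : E), ξb l⟫_ℂ‖ ^ 2 := by positivity
  exact mul_nonpos_of_nonpos_of_nonneg h1 h2
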